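/- There exists a constant c₁ > 0 such that for every positive integer δ and all sufficiently large n, for all sufficiently large K (depending on n and δ): the number of n-element subsets S of the K×K grid whose minimum triangle area A(S) is less than c₁/(2^δ · n³) is at most 2^{−δ} · binom(K², n). -/

import Mathlib

def grid (K : ℕ) : Finset (ℤ × ℤ) :=
  (Finset.range K ×ˢ Finset.range K).image fun p => ((p.1 : ℤ), (p.2 : ℤ))

noncomputable def scale (K : ℕ) (p : ℤ × ℤ) : ℝ × ℝ :=
  ((p.1 : ℝ) / ((K : ℝ) - 1), (p.2 : ℝ) / ((K : ℝ) - 1))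

noncomputable def triArea (P Q R : ℝ × ℝ) : ℝ :=
  |(Q.1 - P.1) * (R.2 - P.2) - (Q.2 - P.2) * (R.1 - P.1)| / 2

def idet (P Q R : ℤ × ℤ) : ℤ :=
  (Q.1 - P.1) * (R.2 - P.2) - (Q.2 - P.2) * (R.1 - P.1)

lemma card_grid (K : ℕ) : (grid K).card = K ^ 2 := by
  rw [grid, Finset.card_image_of_injective, Finset.card_product, Finset.card_range, sq]
  intro p q h
  simp only [Prod.mk.injEq, Int.natCast_inj] at h
  exact Prod.ext h.1 h.2

lemma mem_grid {K : ℕ} {p : ℤ × ℤ} (hp : p ∈ grid K) :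
    0 ≤ p.1 ∧ p.1 < K ∧ 0 ≤ p.2 ∧ p.2 < K := by
  rw [grid, Finset.mem_image] at hp
  obtain ⟨q, hq, rfl⟩ := hp
  rw [Finset.mem_product, Finset.mem_range, Finset.mem_range] at hq
  refine ⟨Int.natCast_nonneg _, ?_, Int.natCast_nonneg _, ?_⟩
  · show (q.1 : ℤ) < (K : ℤ); exact_mod_cast hq.1
  · show (q.2 : ℤ) < (K : ℤ); exact_mod_cast hq.2

lemma triArea_scale {K : ℕ} (hK : 2 ≤ K) (P Q R : ℤ × ℤ) :
    triArea (scale K P) (scale K Q) (scale K R)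
      = |((idet P Q R : ℤ) : ℝ)| / (2 * ((K : ℝ) - 1) ^ 2) := by
  have hc : ((K : ℝ) - 1) ≠ 0 := by
    have : (2 : ℝ) ≤ (K : ℝ) := by exact_mod_cast hK
    nlinarith
  have h1 : ((Q.1 : ℝ) / ((K:ℝ)-1) - (P.1 : ℝ) / ((K:ℝ)-1)) * ((R.2 : ℝ) / ((K:ℝ)-1) - (P.2 : ℝ) / ((K:ℝ)-1))
      - ((Q.2 : ℝ) / ((K:ℝ)-1) - (P.2 : ℝ) / ((K:ℝ)-1)) * ((R.1 : ℝ) / ((K:ℝ)-1) - (P.1 : ℝ) / ((K:ℝ)-1))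
      = ((idet P Q R : ℤ) : ℝ) / ((K:ℝ)-1) ^ 2 := by
    rw [idet]; push_cast
    rw [div_sub_div_same, div_sub_div_same, div_sub_div_same, div_sub_div_same,
      div_mul_div_comm, div_mul_div_comm, div_sub_div_same, ← sq]
  rw [triArea, scale, scale, scale]
  simp only
  rw [h1, abs_div, abs_pow]
  rw [show |(K:ℝ) - 1| = (K:ℝ) - 1 from abs_of_nonneg (by
    have : (2 : ℝ) ≤ (K : ℝ) := by exact_mod_cast hK
    linarith)]
  rw [div_div]; ring_nf

/-- integers x with |a*x - b| ≤ M form a set of size ≤ 2M/|a| + 1 -/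
lemma card_abs_le {a b : ℤ} (ha : a ≠ 0) (M : ℕ) (s : Finset ℤ)
    (h : ∀ x ∈ s, (a * x - b).natAbs ≤ M) :
    s.card ≤ 2 * M / a.natAbs + 1 := by
  rcases s.eq_empty_or_nonempty with rfl | hs
  · simp
  obtain ⟨d, hd⟩ : ∃ d : ℕ, d = 2 * M / a.natAbs := ⟨_, rfl⟩
  rw [← hd]
  have hsub : s ⊆ Finset.Icc (s.min' hs) (s.min' hs + d) := by
    intro x hx
    rw [Finset.mem_Icc]
    refine ⟨Finset.min'_le s x hx, ?_⟩
    have h1 := h x hx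
    have h2 := h _ (s.min'_mem hs)
    have hdle : (a * (x - s.min' hs)).natAbs ≤ 2 * M := by
      have heq : a * (x - s.min' hs) = (a * x - b) - (a * s.min' hs - b) := by ring
      rw [heq]
      calc ((a*x-b) - (a*s.min' hs - b)).natAbs
          ≤ (a*x-b).natAbs + (a*s.min' hs-b).natAbs := Int.natAbs_sub_le _ _
        _ ≤ 2 * M := by omega
    rw [Int.natAbs_mul] at hdle
    have hdiv : (x - s.min' hs).natAbs ≤ d := by
      rw [hd]
      exact (Nat.le_div_iff_mul_le (Nat.pos_of_ne_zero (Int.natAbs_ne_zero.mpr ha))).mpr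
        (by rw [mul_comm]; exact hdle)
    have hx0 := Finset.min'_le s x hx
    omega
  calc s.card ≤ _ := Finset.card_le_card hsub
    _ = d + 1 := by
      rw [Int.card_Icc]
      have : (s.min' hs + (d:ℤ) + 1 - s.min' hs) = ((d + 1 : ℕ) : ℤ) := by push_cast; ring
      rw [this, Int.toNat_natCast]

noncomputable def box (K : ℕ) : Finset (ℤ × ℤ) := Finset.Icc (-(K:ℤ)) K ×ˢ Finset.Icc (-(K:ℤ)) K

lemma card_box (K : ℕ) : (box K).card = (2*K+1)^2 := by
  rw [box, Finset.card_product, Int.card_Icc, sq]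
  congr 1 <;> omega

lemma count_w_le {K M : ℕ} {u : ℤ × ℤ} (hu : u ≠ 0) :
    (((box K)).filter fun w => (u.1 * w.2 - u.2 * w.1).natAbs ≤ M).card
      ≤ (2*K+1) * (2*M / (max u.1.natAbs u.2.natAbs) + 1) := by
  by_cases hc : u.2.natAbs ≤ u.1.natAbs
  · have ha : u.1 ≠ 0 := by
      intro h0
      apply hu
      have : u.2 = 0 := by
        have := hc; rw [h0] at this; simpa using Int.natAbs_eq_zero.mp (by omega)
      exact Prod.ext h0 this
    rw [max_eq_left hc]
    calc (((box K)).filter fun w => (u.1 * w.2 - u.2 * w.1).natAbs ≤ M).card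
        ≤ ((Finset.Icc (-(K:ℤ)) K).biUnion fun x =>
            ((Finset.Icc (-(K:ℤ)) K).filter fun y => (u.1 * y - u.2 * x).natAbs ≤ M).image
              fun y => ((x, y) : ℤ × ℤ)).card := by
          apply Finset.card_le_card
          intro w hw
          rw [Finset.mem_filter, box, Finset.mem_product] at hw
          rw [Finset.mem_biUnion]
          exact ⟨w.1, hw.1.1, Finset.mem_image.mpr ⟨w.2,
            Finset.mem_filter.mpr ⟨hw.1.2, hw.2⟩, rfl⟩⟩
      _ ≤ ∑ x ∈ Finset.Icc (-(K:ℤ)) K,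
            (((Finset.Icc (-(K:ℤ)) K).filter fun y => (u.1 * y - u.2 * x).natAbs ≤ M).image
              fun y => ((x, y) : ℤ × ℤ)).card := Finset.card_biUnion_le
      _ ≤ ∑ x ∈ Finset.Icc (-(K:ℤ)) K, (2*M / u.1.natAbs + 1) := by
          apply Finset.sum_le_sum
          intro x _
          calc _ ≤ ((Finset.Icc (-(K:ℤ)) K).filter fun y => (u.1 * y - u.2 * x).natAbs ≤ M).card :=
                Finset.card_image_le
            _ ≤ 2*M / u.1.natAbs + 1 := card_abs_le ha M _ (fun y hy => (Finset.mem_filter.mp hy).2)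
      _ = (2*K+1) * (2*M / u.1.natAbs + 1) := by
          rw [Finset.sum_const, Int.card_Icc, smul_eq_mul]
          congr 1; omega
  · push_neg at hc
    have ha : u.2 ≠ 0 := by
      intro h0; rw [h0] at hc; simp at hc
    rw [max_eq_right hc.le]
    calc (((box K)).filter fun w => (u.1 * w.2 - u.2 * w.1).natAbs ≤ M).card
        ≤ ((Finset.Icc (-(K:ℤ)) K).biUnion fun y =>
            ((Finset.Icc (-(K:ℤ)) K).filter fun x => ((-u.2) * x - (-(u.1 * y))).natAbs ≤ M).image
              fun x => ((x, y) : ℤ × ℤ)).card := by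
          apply Finset.card_le_card
          intro w hw
          rw [Finset.mem_filter, box, Finset.mem_product] at hw
          rw [Finset.mem_biUnion]
          refine ⟨w.2, hw.1.2, Finset.mem_image.mpr ⟨w.1,
            Finset.mem_filter.mpr ⟨hw.1.1, ?_⟩, rfl⟩⟩
          have : (-u.2) * w.1 - (-(u.1 * w.2)) = u.1 * w.2 - u.2 * w.1 := by ring
          rw [this]; exact hw.2
      _ ≤ ∑ y ∈ Finset.Icc (-(K:ℤ)) K,
            (((Finset.Icc (-(K:ℤ)) K).filter fun x => ((-u.2) * x - (-(u.1 * y))).natAbs ≤ M).image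
              fun x => ((x, y) : ℤ × ℤ)).card := Finset.card_biUnion_le
      _ ≤ ∑ y ∈ Finset.Icc (-(K:ℤ)) K, (2*M / u.2.natAbs + 1) := by
          apply Finset.sum_le_sum
          intro y _
          calc _ ≤ ((Finset.Icc (-(K:ℤ)) K).filter fun x => ((-u.2) * x - (-(u.1 * y))).natAbs ≤ M).card :=
                Finset.card_image_le
            _ ≤ 2*M / (-u.2).natAbs + 1 := card_abs_le (neg_ne_zero.mpr ha) M _
                (fun x hx => (Finset.mem_filter.mp hx).2)
            _ = 2*M / u.2.natAbs + 1 := by rw [Int.natAbs_neg]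
      _ = (2*K+1) * (2*M / u.2.natAbs + 1) := by
          rw [Finset.sum_const, Int.card_Icc, smul_eq_mul]
          congr 1; omega

lemma sum_shells (K M : ℕ) :
    ∑ u ∈ (box K).filter (fun u => u ≠ 0), (2*M / (max u.1.natAbs u.2.natAbs) + 1)
      ≤ K * (16*M + 8*K) := by
  rw [← Finset.sum_fiberwise_of_maps_to (g := fun u : ℤ × ℤ => max u.1.natAbs u.2.natAbs)
    (t := Finset.Icc 1 K) ?_]
  · calc ∑ t ∈ Finset.Icc 1 K, ∑ u ∈ ((box K).filter (fun u => u ≠ 0)).filter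
          (fun u => max u.1.natAbs u.2.natAbs = t), (2*M / (max u.1.natAbs u.2.natAbs) + 1)
        ≤ ∑ t ∈ Finset.Icc 1 K, (16*M + 8*K) := by
          apply Finset.sum_le_sum
          intro t ht
          rw [Finset.mem_Icc] at ht
          have hinner : ∀ u ∈ ((box K).filter (fun u => u ≠ 0)).filter
              (fun u => max u.1.natAbs u.2.natAbs = t),
              (2*M / (max u.1.natAbs u.2.natAbs) + 1) ≤ 2*M/t + 1 := by
            intro u hu
            rw [Finset.mem_filter] at hu
            rw [hu.2]
          calc ∑ u ∈ ((box K).filter (fun u => u ≠ 0)).filter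
                (fun u => max u.1.natAbs u.2.natAbs = t), (2*M / (max u.1.natAbs u.2.natAbs) + 1)
              ≤ (((box K).filter (fun u => u ≠ 0)).filter
                (fun u => max u.1.natAbs u.2.natAbs = t)).card * (2*M/t + 1) := by
                simpa using Finset.sum_le_card_nsmul _ _ _ hinner
            _ ≤ (8*t) * (2*M/t + 1) := by
                apply Nat.mul_le_mul_right
                calc (((box K).filter (fun u => u ≠ 0)).filter
                      (fun u => max u.1.natAbs u.2.natAbs = t)).card
                    ≤ (box t \ box (t-1)).card := by
                      apply Finset.card_le_card
                      intro u hu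
                      simp only [Finset.mem_filter] at hu
                      obtain ⟨⟨_, hne⟩, hmax⟩ := hu
                      rw [Finset.mem_sdiff]
                      constructor
                      · rw [box, Finset.mem_product, Finset.mem_Icc, Finset.mem_Icc]
                        have h1 : u.1.natAbs ≤ t := (le_max_left _ _).trans hmax.le
                        have h2 : u.2.natAbs ≤ t := (le_max_right _ _).trans hmax.le
                        omega
                      · rw [box, Finset.mem_product, Finset.mem_Icc, Finset.mem_Icc]
                        intro hcon
                        have h1 : u.1.natAbs ≤ t - 1 := by omega
                        have h2 : u.2.natAbs ≤ t - 1 := by omega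
                        omega
                  _ ≤ (2*t+1)^2 - (2*(t-1)+1)^2 := by
                      rw [Finset.card_sdiff_of_subset]
                      · rw [card_box, card_box]
                      · rw [box, box]
                        apply Finset.product_subset_product <;>
                          apply Finset.Icc_subset_Icc <;> omega
                  _ ≤ 8*t := by
                      obtain ⟨s, rfl⟩ := Nat.exists_eq_add_of_le ht.1
                      have h : (2*(1+s)+1)^2 = 8*(1+s) + (2*((1+s)-1)+1)^2 := by
                        have hs1 : (1+s) - 1 = s := by omega
                        rw [hs1]
                        ring
                      omega
            _ ≤ 16*M + 8*K := by
                have := Nat.div_mul_le_self (2*M) t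
                have ht1 : 1 ≤ t := ht.1
                have ht2 : t ≤ K := ht.2
                calc (8*t) * (2*M/t + 1) = 8 * (2*M/t * t) + 8*t := by ring
                  _ ≤ 8 * (2*M) + 8*K := by
                      have := Nat.div_mul_le_self (2*M) t
                      omega
                  _ = 16*M + 8*K := by ring
      _ ≤ K * (16*M + 8*K) := by
          rw [Finset.sum_const, smul_eq_mul, Nat.card_Icc]
          apply Nat.mul_le_mul_right
          omega
  · intro u hu
    rw [Finset.mem_filter] at hu
    obtain ⟨hbox, hne⟩ := hu
    rw [box, Finset.mem_product, Finset.mem_Icc, Finset.mem_Icc] at hbox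
    rw [Finset.mem_Icc]
    constructor
    · have : u.1 ≠ 0 ∨ u.2 ≠ 0 := by
        by_contra hc
        push_neg at hc
        exact hne (Prod.ext hc.1 hc.2)
      rcases this with h | h
      · exact le_trans (Int.natAbs_pos.mpr h) (le_max_left _ _)
      · exact le_trans (Int.natAbs_pos.mpr h) (le_max_right _ _)
    · have h1 : u.1.natAbs ≤ K := by
        rcases Int.natAbs_eq u.1 with h | h <;> omega
      have h2 : u.2.natAbs ≤ K := by
        rcases Int.natAbs_eq u.2 with h | h <;> omega
      exact max_le h1 h2

lemma pairs_le (K M : ℕ) :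
    (((box K) ×ˢ (box K)).filter fun p =>
        p.1 ≠ 0 ∧ (p.1.1 * p.2.2 - p.1.2 * p.2.1).natAbs ≤ M).card
      ≤ (2*K+1) * (K * (16*M + 8*K)) := by
  calc (((box K) ×ˢ (box K)).filter fun p =>
        p.1 ≠ 0 ∧ (p.1.1 * p.2.2 - p.1.2 * p.2.1).natAbs ≤ M).card
      ≤ (((box K).filter (fun u => u ≠ 0)).biUnion fun u =>
          (((box K)).filter fun w => (u.1 * w.2 - u.2 * w.1).natAbs ≤ M).image
            fun w => ((u, w) : (ℤ×ℤ) × (ℤ×ℤ))).card := by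
        apply Finset.card_le_card
        intro p hp
        rw [Finset.mem_filter, Finset.mem_product] at hp
        rw [Finset.mem_biUnion]
        exact ⟨p.1, Finset.mem_filter.mpr ⟨hp.1.1, hp.2.1⟩,
          Finset.mem_image.mpr ⟨p.2, Finset.mem_filter.mpr ⟨hp.1.2, hp.2.2⟩, rfl⟩⟩
    _ ≤ ∑ u ∈ (box K).filter (fun u => u ≠ 0),
          ((((box K)).filter fun w => (u.1 * w.2 - u.2 * w.1).natAbs ≤ M).image
            fun w => ((u, w) : (ℤ×ℤ) × (ℤ×ℤ))).card := Finset.card_biUnion_le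
    _ ≤ ∑ u ∈ (box K).filter (fun u => u ≠ 0),
          (2*K+1) * (2*M / (max u.1.natAbs u.2.natAbs) + 1) := by
        apply Finset.sum_le_sum
        intro u hu
        rw [Finset.mem_filter] at hu
        exact le_trans Finset.card_image_le (count_w_le hu.2)
    _ = (2*K+1) * ∑ u ∈ (box K).filter (fun u => u ≠ 0),
          (2*M / (max u.1.natAbs u.2.natAbs) + 1) := by rw [Finset.mul_sum]
    _ ≤ (2*K+1) * (K * (16*M + 8*K)) := Nat.mul_le_mul_left _ (sum_shells K M)

def badT (K M : ℕ) : Finset ((ℤ×ℤ) × (ℤ×ℤ) × (ℤ×ℤ)) :=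
  (grid K ×ˢ grid K ×ˢ grid K).filter fun t =>
    (t.1 ≠ t.2.1 ∧ t.1 ≠ t.2.2 ∧ t.2.1 ≠ t.2.2) ∧ (idet t.1 t.2.1 t.2.2).natAbs ≤ M

lemma badT_le (K M : ℕ) :
    (badT K M).card ≤ K^2 * ((2*K+1) * (K * (16*M + 8*K))) := by
  have key : (badT K M).card ≤ (grid K ×ˢ (((box K) ×ˢ (box K)).filter fun p =>
      p.1 ≠ 0 ∧ (p.1.1 * p.2.2 - p.1.2 * p.2.1).natAbs ≤ M)).card := by
    apply Finset.card_le_card_of_injOn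
      (fun t => (t.1, (t.2.1 - t.1, t.2.2 - t.1)))
    · intro t ht
      rw [Finset.mem_coe, badT, Finset.mem_filter, Finset.mem_product, Finset.mem_product] at ht
      obtain ⟨⟨hP, hQ, hR⟩, ⟨hne1, _, _⟩, hdet⟩ := ht
      rw [Finset.mem_coe, Finset.mem_product, Finset.mem_filter, Finset.mem_product]
      have bP := mem_grid hP
      have bQ := mem_grid hQ
      have bR := mem_grid hR
      refine ⟨hP, ⟨?_, ?_⟩, ?_, ?_⟩
      · rw [box, Finset.mem_product, Finset.mem_Icc, Finset.mem_Icc]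
        simp only [Prod.fst_sub, Prod.snd_sub]
        omega
      · rw [box, Finset.mem_product, Finset.mem_Icc, Finset.mem_Icc]
        simp only [Prod.fst_sub, Prod.snd_sub]
        omega
      · exact sub_ne_zero.mpr (Ne.symm hne1)
      · show ((t.2.1.1 - t.1.1) * (t.2.2.2 - t.1.2)
            - (t.2.1.2 - t.1.2) * (t.2.2.1 - t.1.1)).natAbs ≤ M
        rw [show (t.2.1.1 - t.1.1) * (t.2.2.2 - t.1.2)
            - (t.2.1.2 - t.1.2) * (t.2.2.1 - t.1.1) = idet t.1 t.2.1 t.2.2 from by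
          rw [idet]]
        exact hdet
    · intro a ha b hb hab
      simp only [Prod.mk.injEq] at hab
      obtain ⟨h1, h2, h3⟩ := hab
      have e2 : a.2.1 = b.2.1 := by
        have := h2
        rw [h1] at this
        exact sub_left_injective this
      have e3 : a.2.2 = b.2.2 := by
        have := h3
        rw [h1] at this
        exact sub_left_injective this
      exact Prod.ext h1 (Prod.ext e2 e3)
  calc (badT K M).card ≤ _ := key
    _ = (grid K).card * _ := Finset.card_product _ _
    _ ≤ K^2 * ((2*K+1) * (K * (16*M + 8*K))) := by
        rw [card_grid]
        exact Nat.mul_le_mul_left _ (pairs_le K M)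

lemma card_supersets_le {α : Type*} [DecidableEq α] (s T : Finset α) (n : ℕ) (hT : T ⊆ s) :
    ((s.powersetCard n).filter fun S => T ⊆ S).card ≤ (s.card - T.card).choose (n - T.card) := by
  rw [← Finset.card_sdiff_of_subset hT, ← Finset.card_powersetCard]
  apply Finset.card_le_card_of_injOn (fun S => S \ T)
  · intro S hS
    rw [Finset.mem_coe, Finset.mem_filter, Finset.mem_powersetCard] at hS
    obtain ⟨⟨hsub, hcard⟩, hTS⟩ := hS
    rw [Finset.mem_coe, Finset.mem_powersetCard]
    constructor
    · exact Finset.sdiff_subset_sdiff hsub (le_refl _)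
    · rw [Finset.card_sdiff_of_subset hTS, hcard]
  · intro S hS S' hS' h
    rw [Finset.mem_coe, Finset.mem_filter] at hS hS'
    have e1 : S = (S \ T) ∪ T := by
      rw [Finset.sdiff_union_of_subset hS.2]
    have e2 : S' = (S' \ T) ∪ T := by
      rw [Finset.sdiff_union_of_subset hS'.2]
    rw [e1, e2]
    simp only at h
    rw [h]

lemma choose_id (b a : ℕ) :
    (b+3).choose (a+3) * ((a+3)*(a+2)*(a+1)) = ((b+3)*(b+2)*(b+1)) * (b.choose a) := by
  have h1 : (b+3) * (b+2).choose (a+2) = (b+3).choose (a+3) * (a+3) :=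
    Nat.add_one_mul_choose_eq (b+2) (a+2)
  have h2 : (b+2) * (b+1).choose (a+1) = (b+2).choose (a+2) * (a+2) :=
    Nat.add_one_mul_choose_eq (b+1) (a+1)
  have h3 : (b+1) * b.choose a = (b+1).choose (a+1) * (a+1) :=
    Nat.add_one_mul_choose_eq b a
  calc (b+3).choose (a+3) * ((a+3)*(a+2)*(a+1))
      = ((b+3).choose (a+3) * (a+3)) * ((a+2)*(a+1)) := by ring
    _ = ((b+3) * (b+2).choose (a+2)) * ((a+2)*(a+1)) := by rw [h1]
    _ = (b+3) * (((b+2).choose (a+2) * (a+2)) * (a+1)) := by ring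
    _ = (b+3) * (((b+2) * (b+1).choose (a+1)) * (a+1)) := by rw [h2]
    _ = ((b+3)*(b+2)) * ((b+1).choose (a+1) * (a+1)) := by ring
    _ = ((b+3)*(b+2)) * ((b+1) * b.choose a) := by rw [h3]
    _ = ((b+3)*(b+2)*(b+1)) * (b.choose a) := by ring

lemma arith_main (k ν d m : ℝ) (hk2 : 2 ≤ k) (hν : 3 ≤ ν) (hd : 1 ≤ d)
    (hm0 : 0 ≤ m) (hm : 768 * d * ν^3 * m ≤ k^2) (hk : 384 * ν^3 * d ≤ k) :
    (k^2 * ((2*k+1) * (k * (16*m + 8*k)))) * d * ν^3 ≤ k^2 * (k^2-1) * (k^2-2) := by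
  have hk0 : 0 ≤ k := by linarith
  have hν0 : 0 ≤ ν := by linarith
  have hd0 : 0 ≤ d := by linarith
  have h3k : 2*k+1 ≤ 3*k := by nlinarith
  have hdv : 0 ≤ d * ν^3 := by positivity
  have step1 : (k^2 * ((2*k+1) * (k * (16*m + 8*k)))) * d * ν^3
      ≤ (k^2 * ((3*k) * (k * (16*m + 8*k)))) * d * ν^3 := by
    have h1 : 0 ≤ 16*m + 8*k := by linarith
    have h2 : 0 ≤ k * (16*m + 8*k) := by positivity
    nlinarith [mul_nonneg (mul_nonneg (sq_nonneg k) h2) hdv]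
  have step2 : (k^2 * ((3*k) * (k * (16*m + 8*k)))) * d * ν^3
      = 48 * k^4 * (d * ν^3 * m) + 24 * k^5 * (d * ν^3) := by ring
  have hmb : d * ν^3 * m ≤ k^2 / 768 := by nlinarith
  have hkb : d * ν^3 ≤ k / 384 := by nlinarith [pow_pos (by linarith : (0:ℝ) < ν) 3]
  have step3 : 48 * k^4 * (d * ν^3 * m) ≤ k^6 / 16 := by
    have h4 : (0:ℝ) ≤ 48 * k^4 := by positivity
    nlinarith [mul_le_mul_of_nonneg_left hmb h4]
  have step4 : 24 * k^5 * (d * ν^3) ≤ k^6 / 16 := by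
    have h5 : (0:ℝ) ≤ 24 * k^5 := by positivity
    nlinarith [mul_le_mul_of_nonneg_left hkb h5]
  have step5 : k^6 / 8 ≤ k^2 * (k^2-1) * (k^2-2) := by
    have h4 : 4 ≤ k^2 := by nlinarith
    nlinarith [sq_nonneg k, sq_nonneg (k^2 - 2)]
  linarith

noncomputable def gridMinArea (K : ℕ) (S : Finset (ℤ × ℤ)) : ℝ :=
  sInf {a | ∃ P ∈ S, ∃ Q ∈ S, ∃ R ∈ S, P ≠ Q ∧ P ≠ R ∧ Q ≠ R ∧
    a = triArea (scale K P) (scale K Q) (scale K R)}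

set_option maxHeartbeats 2000000 in
open Classical in
theorem count_small_min_area_subsets_le :
    ∃ c₁ : ℝ, 0 < c₁ ∧ ∀ δ : ℕ, 0 < δ → ∃ N : ℕ, ∀ n : ℕ, N ≤ n →
      ∃ K₀ : ℕ, ∀ K : ℕ, K₀ ≤ K →
        (((((grid K).powersetCard n).filter fun S =>
            gridMinArea K S < c₁ / (2 ^ δ * (n : ℝ) ^ 3)).card : ℝ))
          ≤ ((K ^ 2).choose n : ℝ) / 2 ^ δ := by
  classical
  refine ⟨1/1536, by norm_num, ?_⟩
  intro δ hδ
  refine ⟨3, ?_⟩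
  intro n hn3
  refine ⟨384 * n^3 * 2^δ, ?_⟩
  intro K hK
  have hn1 : 1 ≤ n^3 := Nat.one_le_iff_ne_zero.mpr (by positivity)
  have hp1 : 1 ≤ 2^δ := Nat.one_le_two_pow
  have hK2 : 2 ≤ K := by
    have h384 : 384 ≤ 384 * n^3 * 2^δ := by
      calc 384 = 384 * 1 * 1 := by norm_num
        _ ≤ 384 * n^3 * 2^δ := by
            apply Nat.mul_le_mul (Nat.mul_le_mul_left _ hn1) hp1
    omega
  -- the threshold
  set ε : ℝ := 1/1536 / (2^δ * (n:ℝ)^3) with hε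
  have hnR : (3:ℝ) ≤ (n:ℝ) := by exact_mod_cast hn3
  have hdR : (1:ℝ) ≤ (2:ℝ)^δ := one_le_pow₀ (by norm_num)
  have hε0 : 0 < ε := by
    rw [hε]
    positivity
  set M : ℕ := ⌊2 * ε * (K:ℝ)^2⌋₊ with hM
  -- Step 1: inclusion into the biUnion over bad triples
  have hsubset : (((grid K).powersetCard n).filter fun S =>
      gridMinArea K S < (1/1536 : ℝ) / (2 ^ δ * (n : ℝ) ^ 3)) ⊆
      (badT K M).biUnion (fun t => ((grid K).powersetCard n).filter
        fun S => ({t.1, t.2.1, t.2.2} : Finset (ℤ×ℤ)) ⊆ S) := by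
    intro S hS
    rw [Finset.mem_filter] at hS
    obtain ⟨hpow, hlt⟩ := hS
    have hpow' := hpow
    rw [Finset.mem_powersetCard] at hpow'
    obtain ⟨hSgrid, hScard⟩ := hpow'
    have h3 : 2 < S.card := by omega
    obtain ⟨P₀, Q₀, R₀, hP₀, hQ₀, hR₀, h12, h13, h23⟩ := Finset.two_lt_card_iff.mp h3
    have hne : {a : ℝ | ∃ P ∈ S, ∃ Q ∈ S, ∃ R ∈ S, P ≠ Q ∧ P ≠ R ∧ Q ≠ R ∧
        a = triArea (scale K P) (scale K Q) (scale K R)}.Nonempty :=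
      ⟨_, P₀, hP₀, Q₀, hQ₀, R₀, hR₀, h12, h13, h23, rfl⟩
    rw [gridMinArea] at hlt
    obtain ⟨x, hx, hxlt⟩ := exists_lt_of_csInf_lt hne hlt
    obtain ⟨Pp, hPp, Qq, hQq, Rr, hRr, g12, g13, g23, rfl⟩ := hx
    rw [triArea_scale hK2] at hxlt
    have hKR : (2:ℝ) ≤ (K:ℝ) := by exact_mod_cast hK2
    have hpos : (0:ℝ) < 2 * ((K:ℝ) - 1)^2 := by nlinarith
    have habs : |((idet Pp Qq Rr : ℤ) : ℝ)| < ε * (2 * ((K:ℝ)-1)^2) := by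
      rw [div_lt_iff₀ hpos] at hxlt
      exact hxlt
    have habs2 : |((idet Pp Qq Rr : ℤ) : ℝ)| ≤ 2 * ε * (K:ℝ)^2 := by
      have h1 : ε * (2 * ((K:ℝ)-1)^2) ≤ 2 * ε * (K:ℝ)^2 := by nlinarith
      linarith
    have hMle : (idet Pp Qq Rr).natAbs ≤ M := by
      rw [hM]
      apply Nat.le_floor
      rw [Nat.cast_natAbs, Int.cast_abs]
      exact habs2
    rw [Finset.mem_biUnion]
    refine ⟨(Pp, Qq, Rr), ?_, ?_⟩
    · rw [badT, Finset.mem_filter, Finset.mem_product, Finset.mem_product]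
      exact ⟨⟨hSgrid hPp, hSgrid hQq, hSgrid hRr⟩, ⟨g12, g13, g23⟩, hMle⟩
    · rw [Finset.mem_filter]
      refine ⟨hpow, ?_⟩
      simp only [Finset.insert_subset_iff, Finset.singleton_subset_iff]
      exact ⟨hPp, hQq, hRr⟩
  -- Step 2: cardinality bound in ℕ
  have hcount : (((grid K).powersetCard n).filter fun S =>
      gridMinArea K S < (1/1536 : ℝ) / (2 ^ δ * (n : ℝ) ^ 3)).card
      ≤ (badT K M).card * ((K^2 - 3).choose (n - 3)) := by
    apply le_trans (Finset.card_le_card hsubset)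
    apply le_trans Finset.card_biUnion_le
    rw [← smul_eq_mul]
    apply Finset.sum_le_card_nsmul
    intro t ht
    rw [badT, Finset.mem_filter, Finset.mem_product, Finset.mem_product] at ht
    obtain ⟨⟨hP, hQ, hR⟩, ⟨d12, d13, d23⟩, _⟩ := ht
    have hTsub : ({t.1, t.2.1, t.2.2} : Finset (ℤ×ℤ)) ⊆ grid K := by
      simp only [Finset.insert_subset_iff, Finset.singleton_subset_iff]
      exact ⟨hP, hQ, hR⟩
    have hTcard : ({t.1, t.2.1, t.2.2} : Finset (ℤ×ℤ)).card = 3 :=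
      Finset.card_eq_three.mpr ⟨t.1, t.2.1, t.2.2, d12, d13, d23, rfl⟩
    have hle := card_supersets_le (grid K) _ n hTsub
    rw [card_grid, hTcard] at hle
    exact hle
  -- Step 3: conclude with real arithmetic
  have hK4 : 4 ≤ K^2 := by calc 4 = 2^2 := by norm_num
                                _ ≤ K^2 := Nat.pow_le_pow_left hK2 2
  obtain ⟨a, ha⟩ : ∃ a, n = a + 3 := ⟨n - 3, by omega⟩
  obtain ⟨b, hb⟩ : ∃ b, K^2 = b + 3 := ⟨K^2 - 3, by omega⟩
  have hKR : (2:ℝ) ≤ (K:ℝ) := by exact_mod_cast hK2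
  have hMR : ((M:ℕ):ℝ) ≤ 2 * ε * (K:ℝ)^2 := by
    rw [hM]
    apply Nat.floor_le
    positivity
  have hεd : ε * ((2:ℝ)^δ * (n:ℝ)^3) = 1/1536 := by
    rw [hε]
    field_simp
  have hKcast : ((384 * n^3 * 2^δ : ℕ) : ℝ) ≤ (K:ℝ) := by exact_mod_cast hK
  have hAM := arith_main (K:ℝ) (n:ℝ) ((2:ℝ)^δ) ((M:ℕ):ℝ) hKR hnR hdR
    (by positivity)
    (by nlinarith [hεd, hMR, sq_nonneg (K:ℝ)])
    (by push_cast at hKcast; nlinarith [hKcast])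
  -- auxiliary casts
  have haR : ((n:ℝ)) = (a:ℝ) + 3 := by exact_mod_cast ha
  have hbR : ((K:ℝ))^2 = (b:ℝ) + 3 := by exact_mod_cast hb
  have hkey : ((K:ℝ)^2 * ((2*(K:ℝ)+1) * ((K:ℝ) * (16*((M:ℕ):ℝ) + 8*(K:ℝ))))) * (2:ℝ)^δ
      * (((a:ℝ)+3)*((a:ℝ)+2)*((a:ℝ)+1)) ≤ ((b:ℝ)+3)*((b:ℝ)+2)*((b:ℝ)+1) := by
    have hpre : (0:ℝ) ≤ (K:ℝ)^2 * ((2*(K:ℝ)+1) * ((K:ℝ) * (16*((M:ℕ):ℝ) + 8*(K:ℝ)))) * (2:ℝ)^δ := by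
      positivity
    have hfac : (((a:ℝ)+3)*((a:ℝ)+2)*((a:ℝ)+1)) ≤ (n:ℝ)^3 := by
      rw [haR]
      nlinarith [sq_nonneg ((a:ℝ))]
    calc ((K:ℝ)^2 * ((2*(K:ℝ)+1) * ((K:ℝ) * (16*((M:ℕ):ℝ) + 8*(K:ℝ))))) * (2:ℝ)^δ
          * (((a:ℝ)+3)*((a:ℝ)+2)*((a:ℝ)+1))
        ≤ ((K:ℝ)^2 * ((2*(K:ℝ)+1) * ((K:ℝ) * (16*((M:ℕ):ℝ) + 8*(K:ℝ))))) * (2:ℝ)^δ * (n:ℝ)^3 :=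
          mul_le_mul_of_nonneg_left hfac hpre
      _ = ((K:ℝ)^2 * ((2*(K:ℝ)+1) * ((K:ℝ) * (16*((M:ℕ):ℝ) + 8*(K:ℝ))))) * (2:ℝ)^δ * (n:ℝ)^3 := rfl
      _ ≤ (K:ℝ)^2 * ((K:ℝ)^2 - 1) * ((K:ℝ)^2 - 2) := hAM
      _ = ((b:ℝ)+3)*((b:ℝ)+2)*((b:ℝ)+1) := by rw [hbR]; ring
  have hid : (((b+3).choose (a+3) : ℕ) : ℝ) * (((a:ℝ)+3)*((a:ℝ)+2)*((a:ℝ)+1))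
      = (((b:ℝ)+3)*((b:ℝ)+2)*((b:ℝ)+1)) * ((b.choose a : ℕ) : ℝ) := by
    exact_mod_cast choose_id b a
  have hchoose_eq : (K^2).choose n = (b+3).choose (a+3) := by rw [ha, hb]
  have hBT : ((badT K M).card : ℝ) ≤ (K:ℝ)^2 * ((2*(K:ℝ)+1) * ((K:ℝ) * (16*((M:ℕ):ℝ) + 8*(K:ℝ)))) := by
    have := badT_le K M
    have hcast : ((badT K M).card : ℝ) ≤ ((K^2 * ((2*K+1) * (K * (16*M + 8*K))) : ℕ) : ℝ) := by
      exact_mod_cast this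
    push_cast at hcast
    convert hcast using 2
  calc ((((grid K).powersetCard n).filter fun S =>
        gridMinArea K S < (1/1536 : ℝ) / (2 ^ δ * (n : ℝ) ^ 3)).card : ℝ)
      ≤ (((badT K M).card * ((K^2 - 3).choose (n - 3)) : ℕ) : ℝ) := by exact_mod_cast hcount
    _ = ((badT K M).card : ℝ) * (((K^2 - 3).choose (n - 3) : ℕ) : ℝ) := by push_cast; ring
    _ = ((badT K M).card : ℝ) * ((b.choose a : ℕ) : ℝ) := by
        rw [show K^2 - 3 = b by omega, show n - 3 = a by omega]
    _ ≤ ((K:ℝ)^2 * ((2*(K:ℝ)+1) * ((K:ℝ) * (16*((M:ℕ):ℝ) + 8*(K:ℝ))))) * ((b.choose a : ℕ) : ℝ) :=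
        mul_le_mul_of_nonneg_right hBT (by positivity)
    _ ≤ ((K ^ 2).choose n : ℝ) / 2 ^ δ := by
        rw [le_div_iff₀ (by positivity : (0:ℝ) < (2:ℝ)^δ), hchoose_eq]
        have hpos3 : (0:ℝ) < ((a:ℝ)+3)*((a:ℝ)+2)*((a:ℝ)+1) := by positivity
        rw [← mul_le_mul_iff_of_pos_right hpos3]
        have hmul := mul_le_mul_of_nonneg_right hkey
          (show (0:ℝ) ≤ ((b.choose a : ℕ) : ℝ) by positivity)
        nlinarith [hmul, hid]
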